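/- Let V be a compact metric space and g : V → V a continuous map. Suppose g^K is locally expanding for some K ∈ ℕ₊ and g satisfies Wieler's Axiom 2: there exist β > 0 and γ ∈ (0,1) such that for all v ∈ V and ε ∈ (0, β], g^K(B(g^K(v), ε)) ⊆ g^{2K}(B(v, γε)). Then g is a local homeomorphism. -/

import Mathlib

/-- If `g^K` is locally expanding and `g` satisfies Wieler's Axiom 2, then `g` is a
local homeomorphism. -/
theorem stmt2 {V : Type*} [MetricSpace V] [CompactSpace V]
    (g : V → V) (hcont : Continuous g) (K : ℕ) (hK : 0 < K)
    (hexp : ∃ δ > (0 : ℝ), ∃ lam > (1 : ℝ), ∀ x y : V, dist x y < δ →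
      lam * dist x y ≤ dist (g^[K] x) (g^[K] y))
    (β γ : ℝ) (hβ : 0 < β) (hγ0 : 0 < γ) (hγ1 : γ < 1)
    (ax2 : ∀ v : V, ∀ ε : ℝ, 0 < ε → ε ≤ β →
      g^[K] '' Metric.ball (g^[K] v) ε ⊆ g^[2 * K] '' Metric.ball v (γ * ε)) :
    IsLocalHomeomorph g := by
  obtain ⟨δ, hδ, lam, hlam, hexp⟩ := hexp
  -- collapse of equal images at distance < δ
  have hcollapse : ∀ x y : V, dist x y < δ → g^[K] x = g^[K] y → x = y := by
    intro x y hxy heq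
    have h := hexp x y hxy
    rw [heq, dist_self] at h
    have : dist x y ≤ 0 := by nlinarith [dist_nonneg (x := x) (y := y)]
    exact dist_le_zero.mp this
  -- uniform continuity of iterates
  have huc : ∀ n : ℕ, ∀ ε : ℝ, 0 < ε → ∃ η > (0 : ℝ), ∀ a b : V, dist a b < η →
      dist (g^[n] a) (g^[n] b) < ε := by
    intro n ε hε
    have : UniformContinuous (g^[n]) :=
      CompactSpace.uniformContinuous_of_continuous (hcont.iterate n)
    rcases Metric.uniformContinuous_iff.mp this ε hε with ⟨η, hη, h⟩
    exact ⟨η, hη, fun a b hab => h hab⟩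
  -- modulus for g^[K] at δ/2
  obtain ⟨η₁, hη₁, hmodK⟩ := huc K (δ / 2) (by linarith)
  set ε₀ : ℝ := min β (min (δ / 2) (η₁ / γ)) with hε₀def
  have hε₀ : 0 < ε₀ := by
    refine lt_min hβ (lt_min (by linarith) (div_pos hη₁ hγ0))
  -- Lemma A : local ball-surjectivity of g^[K]
  have lemA : ∀ v : V, ∀ ε : ℝ, 0 < ε → ε ≤ ε₀ →
      Metric.ball (g^[K] v) ε ⊆ g^[K] '' Metric.ball v (γ * ε) := by
    intro v ε hε hεε₀ w hw
    have hwmem : g^[K] w ∈ g^[K] '' Metric.ball (g^[K] v) ε := ⟨w, hw, rfl⟩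
    have hεβ : ε ≤ β := hεε₀.trans (min_le_left _ _)
    obtain ⟨v₁, hv₁, hv₁eq⟩ := ax2 v ε hε hεβ hwmem
    have h2K : g^[2 * K] v₁ = g^[K] (g^[K] v₁) := by
      rw [two_mul, Function.iterate_add_apply]
    have heq : g^[K] w = g^[K] (g^[K] v₁) := by rw [← hv₁eq, h2K]
    have hd1 : dist v v₁ < η₁ := by
      have h1 : dist v₁ v < γ * ε := Metric.mem_ball.mp hv₁
      have h2 : γ * ε ≤ η₁ := by
        have : ε ≤ η₁ / γ := hεε₀.trans ((min_le_right _ _).trans (min_le_right _ _))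
        calc γ * ε ≤ γ * (η₁ / γ) := by nlinarith
          _ = η₁ := by field_simp
      rw [dist_comm]; linarith
    have hdK : dist (g^[K] v) (g^[K] v₁) < δ / 2 := hmodK v v₁ hd1
    have hdw : dist w (g^[K] v₁) < δ := by
      have h3 : ε ≤ δ / 2 := hεε₀.trans ((min_le_right _ _).trans (min_le_left _ _))
      calc dist w (g^[K] v₁) ≤ dist w (g^[K] v) + dist (g^[K] v) (g^[K] v₁) :=
            dist_triangle _ _ _
        _ < ε + δ / 2 := by
            have := Metric.mem_ball.mp hw
            linarith
        _ ≤ δ := by linarith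
    have : w = g^[K] v₁ := hcollapse w (g^[K] v₁) hdw heq
    exact ⟨v₁, hv₁, this.symm⟩
  -- Lemma B : g maps balls onto neighborhoods, uniformly
  have lemB : ∀ ρ : ℝ, 0 < ρ → ∃ η > (0 : ℝ), ∀ u : V,
      Metric.ball (g u) η ⊆ g '' Metric.ball u ρ := by
    intro ρ hρ
    obtain ⟨n, rfl⟩ : ∃ n, K = n + 1 := ⟨K - 1, (Nat.succ_pred_eq_of_pos hK).symm⟩
    -- modulus for g at δ/2
    obtain ⟨θ, hθ, hmodg⟩ := huc 1 (δ / 2) (by linarith)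
    set ε' : ℝ := min ε₀ (min (ρ / γ) (θ / γ)) with hε'def
    have hε' : 0 < ε' := lt_min hε₀ (lt_min (div_pos hρ hγ0) (div_pos hθ hγ0))
    obtain ⟨η₂, hη₂, hmodn⟩ := huc n ε' hε'
    refine ⟨min η₂ (δ / 2), lt_min hη₂ (by linarith), fun u z hz => ?_⟩
    have hz' : dist z (g u) < min η₂ (δ / 2) := Metric.mem_ball.mp hz
    have h1 : dist (g^[n] z) (g^[n] (g u)) < ε' :=
      hmodn z (g u) (hz'.trans_le (min_le_left _ _))
    have h2 : g^[n] (g u) = g^[n + 1] u := (Function.iterate_succ_apply g n u).symm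
    have h3 : g^[n] z ∈ Metric.ball (g^[n + 1] u) ε' := by
      rw [Metric.mem_ball, ← h2]; exact h1
    obtain ⟨y, hy, hyeq⟩ := lemA u ε' hε' (min_le_left _ _) h3
    -- hyeq : g^[n+1] y = g^[n] z
    have h4 : g^[n] (g y) = g^[n] z := by
      rw [← Function.iterate_succ_apply g n y]; exact hyeq
    have h5 : g^[n + 1] (g y) = g^[n + 1] z := by
      rw [Function.iterate_succ_apply' g n (g y), Function.iterate_succ_apply' g n z, h4]
    have hyu : dist y u < γ * ε' := Metric.mem_ball.mp hy
    have hγε'θ : γ * ε' ≤ θ := by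
      have : ε' ≤ θ / γ := (min_le_right _ _).trans (min_le_right _ _)
      calc γ * ε' ≤ γ * (θ / γ) := by nlinarith
        _ = θ := by field_simp
    have h6 : dist (g y) (g u) < δ / 2 := by
      have := hmodg y u (by linarith)
      simpa using this
    have h7 : dist z (g y) < δ := by
      calc dist z (g y) ≤ dist z (g u) + dist (g u) (g y) := dist_triangle _ _ _
        _ < δ / 2 + δ / 2 := by
            have := hz'.trans_le (min_le_right _ _)
            rw [dist_comm (g u) (g y)]
            linarith
        _ = δ := by ring
    have h8 : z = g y := hcollapse z (g y) h7 h5.symm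
    refine ⟨y, ?_, h8.symm⟩
    have hγε'ρ : γ * ε' ≤ ρ := by
      have : ε' ≤ ρ / γ := (min_le_right _ _).trans (min_le_left _ _)
      calc γ * ε' ≤ γ * (ρ / γ) := by nlinarith
        _ = ρ := by field_simp
    exact Metric.mem_ball.mpr (by linarith)
  -- g is an open map
  have hopen : IsOpenMap g := by
    intro U hU
    rw [Metric.isOpen_iff]
    rintro w ⟨u, hu, rfl⟩
    obtain ⟨ρ, hρ, hball⟩ := Metric.isOpen_iff.mp hU u hu
    obtain ⟨η, hη, h⟩ := lemB ρ hρ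
    exact ⟨η, hη, (h u).trans (Set.image_mono (f := g) hball)⟩
  -- conclude: restriction to small balls is an open embedding
  rw [isLocalHomeomorph_iff_isOpenEmbedding_restrict]
  intro v
  refine ⟨Metric.ball v (δ / 2), Metric.ball_mem_nhds v (by linarith), ?_⟩
  apply Topology.IsOpenEmbedding.of_continuous_injective_isOpenMap
  · exact hcont.comp continuous_subtype_val
  · rintro ⟨x, hx⟩ ⟨y, hy⟩ hxy
    have hdxy : dist x y < δ := by
      have h1 : dist x v < δ / 2 := Metric.mem_ball.mp hx
      have h2 : dist y v < δ / 2 := Metric.mem_ball.mp hy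
      calc dist x y ≤ dist x v + dist v y := dist_triangle _ _ _
        _ < δ / 2 + δ / 2 := by rw [dist_comm v y]; linarith
        _ = δ := by ring
    have hKeq : g^[K] x = g^[K] y := by
      obtain ⟨n, rfl⟩ : ∃ n, K = n + 1 := ⟨K - 1, (Nat.succ_pred_eq_of_pos hK).symm⟩
      have : g x = g y := hxy
      simp only [Function.iterate_succ_apply, this]
    exact Subtype.ext (hcollapse x y hdxy hKeq)
  · exact hopen.restrict Metric.isOpen_ball
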